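/- Over the field of fractions of F_2[z1, z2, z3], the system of three linear equations f0 = f1·z1^{-1} + f2·z1^{-3} + z1^{-7}, f1 = f0·z2 + f2·z2^{-2} + z2^{-6}, f2 = f0·z3^3 + f1·z3^2 + z3^{-4} in the unknowns f0, f1, f2 has a unique solution, and its f0-component equals z1^{-1}z2^{-2}z3^{-4} + z1^{-1}z2^{-4}z3^{-2} + z1^{-2}z2^{-1}z3^{-4} + z1^{-2}z2^{-4}z3^{-1} + z1^{-4}z2^{-1}z3^{-2} + z1^{-4}z2^{-2}z3^{-1}. -/

import Mathlib

set_option maxHeartbeats 1000000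
set_option synthInstance.maxHeartbeats 1000000

open MvPolynomial

/-- The field F₂(z₁,z₂,z₃) of rational functions over the field with two elements. -/
noncomputable abbrev K5 : Type := FractionRing (MvPolynomial (Fin 3) (ZMod 2))

noncomputable def z5 (i : Fin 3) : K5 :=
  algebraMap (MvPolynomial (Fin 3) (ZMod 2)) K5 (X i)

/-- The system f0 = f1·z1⁻¹ + f2·z1⁻³ + z1⁻⁷, f1 = f0·z2 + f2·z2⁻² + z2⁻⁶,
f2 = f0·z3³ + f1·z3² + z3⁻⁴ over F₂(z1,z2,z3). -/
def Eqs5 (f : K5 × K5 × K5) : Prop :=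
  f.1 = f.2.1 * (z5 0) ^ (-1 : ℤ) + f.2.2 * (z5 0) ^ (-3 : ℤ) + (z5 0) ^ (-7 : ℤ) ∧
  f.2.1 = f.1 * (z5 1) + f.2.2 * (z5 1) ^ (-2 : ℤ) + (z5 1) ^ (-6 : ℤ) ∧
  f.2.2 = f.1 * (z5 2) ^ 3 + f.2.1 * (z5 2) ^ 2 + (z5 2) ^ (-4 : ℤ)

/- ======== auxiliary material ======== -/

lemma h2K : (2 : K5) = 0 := by
  haveI : CharP K5 2 := charP_of_injective_algebraMap
    (IsFractionRing.injective (MvPolynomial (Fin 3) (ZMod 2)) K5) 2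
  exact_mod_cast CharP.cast_eq_zero K5 2

lemma nzK (p : MvPolynomial (Fin 3) (ZMod 2)) (v : Fin 3 → ZMod 2)
    (h : eval v p ≠ 0) : algebraMap (MvPolynomial (Fin 3) (ZMod 2)) K5 p ≠ 0 := by
  intro h0
  apply h
  have : p = 0 := IsFractionRing.injective (MvPolynomial (Fin 3) (ZMod 2)) K5 (by simpa using h0)
  simp [this]

lemma hz5 (i : Fin 3) : z5 i ≠ 0 := by
  apply nzK _ (fun _ => 1); simp

lemma hzz (i j : Fin 3) (hij : i ≠ j) : z5 i + z5 j ≠ 0 := by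
  rw [show z5 i + z5 j = algebraMap (MvPolynomial (Fin 3) (ZMod 2)) K5 (X i + X j) by
    rw [map_add]; rfl]
  apply nzK _ (fun k => if k = i then 1 else 0)
  simp [hij, (Ne.symm hij : j ≠ i)]

lemma hsym : z5 0 * z5 1 + z5 0 * z5 2 + z5 1 * z5 2 ≠ 0 := by
  rw [show z5 0 * z5 1 + z5 0 * z5 2 + z5 1 * z5 2
      = algebraMap (MvPolynomial (Fin 3) (ZMod 2)) K5 (X 0 * X 1 + X 0 * X 2 + X 1 * X 2) by
    rw [map_add, map_add, map_mul, map_mul, map_mul]; rfl]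
  apply nzK _ (fun _ => 1)
  simp
  decide

/-- common monomial denominator -/
noncomputable def M45 : K5 := (z5 0)^4*(z5 1)^4*(z5 2)^4

noncomputable def Dp5 : K5 :=
  (z5 0)^3*(z5 1)^2 + (z5 0)^3*(z5 2)^2 + (z5 0)^2*(z5 1)^3 + (z5 0)^2*(z5 2)^3
    + (z5 1)^3*(z5 2)^2 + (z5 1)^2*(z5 2)^3

noncomputable def D5 : K5 := M45 * Dp5

noncomputable def N15 : K5 :=
  (z5 1)^4*(z5 2)^7 + (z5 1)^7*(z5 2)^4 + (z5 0)^4*(z5 2)^7 + (z5 0)^4*(z5 1)^7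
    + (z5 0)^7*(z5 2)^4 + (z5 0)^7*(z5 1)^4

noncomputable def N25 : K5 :=
  (z5 1)^6*(z5 2)^7 + (z5 1)^7*(z5 2)^6 + (z5 0)^6*(z5 2)^7 + (z5 0)^6*(z5 1)^7
    + (z5 0)^7*(z5 2)^6 + (z5 0)^7*(z5 1)^6

noncomputable def S15 : K5 :=
  (z5 1)^2*(z5 2)^4 + (z5 1)^3*(z5 2)^3 + (z5 1)^4*(z5 2)^2 + (z5 0)^2*(z5 2)^4
    + (z5 0)^2*(z5 1)^2*(z5 2)^2 + (z5 0)^2*(z5 1)^4 + (z5 0)^3*(z5 2)^3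
    + (z5 0)^3*(z5 1)^3 + (z5 0)^4*(z5 2)^2 + (z5 0)^4*(z5 1)^2

noncomputable def S25 : K5 :=
  (z5 1)^4*(z5 2)^4 + (z5 0)^2*(z5 1)^2*(z5 2)^4 + (z5 0)^2*(z5 1)^3*(z5 2)^3
    + (z5 0)^2*(z5 1)^4*(z5 2)^2 + (z5 0)^3*(z5 1)^2*(z5 2)^3 + (z5 0)^3*(z5 1)^3*(z5 2)^2
    + (z5 0)^4*(z5 2)^4 + (z5 0)^4*(z5 1)^2*(z5 2)^2 + (z5 0)^4*(z5 1)^4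

noncomputable def T05 : K5 :=
  (z5 0) ^ (-1 : ℤ) * (z5 1) ^ (-2 : ℤ) * (z5 2) ^ (-4 : ℤ)
    + (z5 0) ^ (-1 : ℤ) * (z5 1) ^ (-4 : ℤ) * (z5 2) ^ (-2 : ℤ)
    + (z5 0) ^ (-2 : ℤ) * (z5 1) ^ (-1 : ℤ) * (z5 2) ^ (-4 : ℤ)
    + (z5 0) ^ (-2 : ℤ) * (z5 1) ^ (-4 : ℤ) * (z5 2) ^ (-1 : ℤ)
    + (z5 0) ^ (-4 : ℤ) * (z5 1) ^ (-1 : ℤ) * (z5 2) ^ (-2 : ℤ)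
    + (z5 0) ^ (-4 : ℤ) * (z5 1) ^ (-2 : ℤ) * (z5 2) ^ (-1 : ℤ)

lemma hM45 : M45 ≠ 0 := by
  rw [M45]
  exact mul_ne_zero (mul_ne_zero (pow_ne_zero _ (hz5 0)) (pow_ne_zero _ (hz5 1)))
    (pow_ne_zero _ (hz5 2))

lemma hDp5 : Dp5 ≠ 0 := by
  rw [show Dp5 = (z5 0 + z5 1) * (z5 1 + z5 2) * (z5 0 + z5 2)
      * (z5 0 * z5 1 + z5 0 * z5 2 + z5 1 * z5 2) by
        rw [Dp5]
        linear_combination ( - (z5 0)*(z5 1)*(z5 2)^3 - 2*(z5 0)*(z5 1)^2*(z5 2)^2 - (z5 0)*(z5 1)^3*(z5 2) - 2*(z5 0)^2*(z5 1)*(z5 2)^2 - 2*(z5 0)^2*(z5 1)^2*(z5 2) - (z5 0)^3*(z5 1)*(z5 2)) * h2K]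
  exact mul_ne_zero (mul_ne_zero (mul_ne_zero (hzz 0 1 (by decide)) (hzz 1 2 (by decide)))
    (hzz 0 2 (by decide))) hsym

lemma hD5 : D5 ≠ 0 := mul_ne_zero hM45 hDp5

lemma L0 : T05 = Dp5 / M45 := by
  have hA := hz5 0; have hB := hz5 1; have hC := hz5 2
  rw [eq_div_iff hM45, T05, M45, Dp5]
  simp only [zpow_neg, zpow_one, zpow_ofNat, div_eq_mul_inv, mul_inv, ← inv_pow, pow_one]
  have iA : z5 0 * (z5 0)⁻¹ = 1 := mul_inv_cancel₀ hA
  have iB : z5 1 * (z5 1)⁻¹ = 1 := mul_inv_cancel₀ hB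
  have iC : z5 2 * (z5 2)⁻¹ = 1 := mul_inv_cancel₀ hC
  linear_combination ((z5 1)^4*(z5 2)^4*(z5 1)⁻¹*(z5 2)⁻¹^2 + (z5 1)^4*(z5 2)^4*(z5 1)⁻¹^2*(z5 2)⁻¹ + (z5 0)*(z5 1)^4*(z5 2)^4*(z5 0)⁻¹*(z5 1)⁻¹*(z5 2)⁻¹^2 + (z5 0)*(z5 1)^4*(z5 2)^4*(z5 0)⁻¹*(z5 1)⁻¹^2*(z5 2)⁻¹ + (z5 0)^2*(z5 1)^4*(z5 2)^4*(z5 1)⁻¹*(z5 2)⁻¹^4 + (z5 0)^2*(z5 1)^4*(z5 2)^4*(z5 1)⁻¹^4*(z5 2)⁻¹ + (z5 0)^2*(z5 1)^4*(z5 2)^4*(z5 0)⁻¹^2*(z5 1)⁻¹*(z5 2)⁻¹^2 + (z5 0)^2*(z5 1)^4*(z5 2)^4*(z5 0)⁻¹^2*(z5 1)⁻¹^2*(z5 2)⁻¹ + (z5 0)^3*(z5 1)^4*(z5 2)^4*(z5 1)⁻¹^2*(z5 2)⁻¹^4 + (z5 0)^3*(z5 1)^4*(z5 2)^4*(z5 1)⁻¹^4*(z5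 2)⁻¹^2 + (z5 0)^3*(z5 1)^4*(z5 2)^4*(z5 0)⁻¹*(z5 1)⁻¹*(z5 2)⁻¹^4 + (z5 0)^3*(z5 1)^4*(z5 2)^4*(z5 0)⁻¹*(z5 1)⁻¹^4*(z5 2)⁻¹ + (z5 0)^3*(z5 1)^4*(z5 2)^4*(z5 0)⁻¹^3*(z5 1)⁻¹*(z5 2)⁻¹^2 + (z5 0)^3*(z5 1)^4*(z5 2)^4*(z5 0)⁻¹^3*(z5 1)⁻¹^2*(z5 2)⁻¹) * iA
    + ((z5 1)^2*(z5 2)^4*(z5 2)⁻¹ + (z5 1)^3*(z5 2)^4*(z5 2)⁻¹^2 + (z5 1)^3*(z5 2)^4*(z5 1)⁻¹*(z5 2)⁻¹ + (z5 0)^2*(z5 2)^4*(z5 2)⁻¹ + (z5 0)^2*(z5 1)*(z5 2)^4*(z5 1)⁻¹*(z5 2)⁻¹ + (z5 0)^2*(z5 1)^2*(z5 2)^4*(z5 1)⁻¹^2*(z5 2)⁻¹ + (z5 0)^2*(z5 1)^3*(z5 2)^4*(z5 2)⁻¹^4 + (z5 0)^2*(z5 1)^3*(z5 2)^4*(z5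 1)⁻¹^3*(z5 2)⁻¹ + (z5 0)^3*(z5 2)^4*(z5 2)⁻¹^2 + (z5 0)^3*(z5 1)*(z5 2)^4*(z5 1)⁻¹*(z5 2)⁻¹^2 + (z5 0)^3*(z5 1)^2*(z5 2)^4*(z5 2)⁻¹^4 + (z5 0)^3*(z5 1)^2*(z5 2)^4*(z5 1)⁻¹^2*(z5 2)⁻¹^2 + (z5 0)^3*(z5 1)^3*(z5 2)^4*(z5 1)⁻¹*(z5 2)⁻¹^4 + (z5 0)^3*(z5 1)^3*(z5 2)^4*(z5 1)⁻¹^3*(z5 2)⁻¹^2) * iB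
    + ((z5 1)^2*(z5 2)^3 + (z5 1)^3*(z5 2)^2 + (z5 1)^3*(z5 2)^3*(z5 2)⁻¹ + (z5 0)^2*(z5 2)^3 + (z5 0)^2*(z5 1)^3 + (z5 0)^2*(z5 1)^3*(z5 2)*(z5 2)⁻¹ + (z5 0)^2*(z5 1)^3*(z5 2)^2*(z5 2)⁻¹^2 + (z5 0)^2*(z5 1)^3*(z5 2)^3*(z5 2)⁻¹^3 + (z5 0)^3*(z5 2)^2 + (z5 0)^3*(z5 2)^3*(z5 2)⁻¹ + (z5 0)^3*(z5 1)^2 + (z5 0)^3*(z5 1)^2*(z5 2)*(z5 2)⁻¹ + (z5 0)^3*(z5 1)^2*(z5 2)^2*(z5 2)⁻¹^2 + (z5 0)^3*(z5 1)^2*(z5 2)^3*(z5 2)⁻¹^3) * iC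

lemma conv1 (x y z : K5)
    (h1 : x = y * (z5 0) ^ (-1 : ℤ) + z * (z5 0) ^ (-3 : ℤ) + (z5 0) ^ (-7 : ℤ)) :
    (z5 0)^7*x + (z5 0)^6*y + (z5 0)^4*z = 1 := by
  have hA := hz5 0
  rw [h1]
  simp only [zpow_neg, zpow_one, zpow_ofNat]
  field_simp
  linear_combination ((z5 0)^6*y + (z5 0)^4*z) * h2K

lemma conv2 (x y z : K5)
    (h2 : y = x * (z5 1) + z * (z5 1) ^ (-2 : ℤ) + (z5 1) ^ (-6 : ℤ)) :
    (z5 1)^7*x + (z5 1)^6*y + (z5 1)^4*z = 1 := by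
  have hB := hz5 1
  rw [h2]
  simp only [zpow_neg, zpow_one, zpow_ofNat]
  field_simp
  linear_combination ((z5 1)^7*x + (z5 1)^4*z) * h2K

lemma conv3 (x y z : K5)
    (h3 : z = x * (z5 2)^3 + y * (z5 2)^2 + (z5 2) ^ (-4 : ℤ)) :
    (z5 2)^7*x + (z5 2)^6*y + (z5 2)^4*z = 1 := by
  have hC := hz5 2
  rw [h3]
  simp only [zpow_neg, zpow_one, zpow_ofNat]
  field_simp
  linear_combination ((z5 2)^7*x + (z5 2)^6*y) * h2K

lemma sat5 : Eqs5 (T05, S15/M45, S25/M45) := by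
  have hA := hz5 0; have hB := hz5 1; have hC := hz5 2
  refine ⟨?_, ?_, ?_⟩
  · show T05 = (S15/M45) * (z5 0) ^ (-1 : ℤ) + (S25/M45) * (z5 0) ^ (-3 : ℤ) + (z5 0) ^ (-7 : ℤ)
    rw [L0, S15, S25, M45, Dp5]
    simp only [zpow_neg, zpow_one, zpow_ofNat, div_eq_mul_inv, mul_inv, ← inv_pow, pow_one]
    have iA : z5 0 * (z5 0)⁻¹ = 1 := mul_inv_cancel₀ hA
    have iB : z5 1 * (z5 1)⁻¹ = 1 := mul_inv_cancel₀ hB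
    have iC : z5 2 * (z5 2)⁻¹ = 1 := mul_inv_cancel₀ hC
    linear_combination ( - 2*(z5 2)^4*(z5 0)⁻¹^3*(z5 1)⁻¹^4*(z5 2)⁻¹^4 - 2*(z5 1)^2*(z5 2)^2*(z5 0)⁻¹^3*(z5 1)⁻¹^4*(z5 2)⁻¹^4 - (z5 1)^2*(z5 2)^3*(z5 0)⁻¹^4*(z5 1)⁻¹^4*(z5 2)⁻¹^4 - (z5 1)^2*(z5 2)^4*(z5 0)⁻¹^5*(z5 1)⁻¹^4*(z5 2)⁻¹^4 - (z5 1)^3*(z5 2)^2*(z5 0)⁻¹^4*(z5 1)⁻¹^4*(z5 2)⁻¹^4 - (z5 1)^3*(z5 2)^3*(z5 0)⁻¹^5*(z5 1)⁻¹^4*(z5 2)⁻¹^4 - 2*(z5 1)^4*(z5 0)⁻¹^3*(z5 1)⁻¹^4*(z5 2)⁻¹^4 - (z5 1)^4*(z5 2)^2*(z5 0)⁻¹^5*(z5 1)⁻¹^4*(z5 2)⁻¹^4 - 2*(z5 0)*(z5 2)^4*(z5 0)⁻¹^4*(z5 1)⁻¹^4*(z5 2)⁻¹^4 - 2*(z5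 0)*(z5 1)^2*(z5 2)^2*(z5 0)⁻¹^4*(z5 1)⁻¹^4*(z5 2)⁻¹^4 - (z5 0)*(z5 1)^2*(z5 2)^3*(z5 0)⁻¹^5*(z5 1)⁻¹^4*(z5 2)⁻¹^4 - (z5 0)*(z5 1)^2*(z5 2)^4*(z5 0)⁻¹^6*(z5 1)⁻¹^4*(z5 2)⁻¹^4 - (z5 0)*(z5 1)^3*(z5 2)^2*(z5 0)⁻¹^5*(z5 1)⁻¹^4*(z5 2)⁻¹^4 - (z5 0)*(z5 1)^3*(z5 2)^3*(z5 0)⁻¹^6*(z5 1)⁻¹^4*(z5 2)⁻¹^4 - 2*(z5 0)*(z5 1)^4*(z5 0)⁻¹^4*(z5 1)⁻¹^4*(z5 2)⁻¹^4 - (z5 0)*(z5 1)^4*(z5 2)^2*(z5 0)⁻¹^6*(z5 1)⁻¹^4*(z5 2)⁻¹^4 - (z5 0)^2*(z5 2)^3*(z5 0)⁻¹^4*(z5 1)⁻¹^4*(z5 2)⁻¹^4 - (z5 0)^2*(z5 2)^4*(z5 0)⁻¹^5*(z5 1)⁻¹^4*(z5 2)⁻¹^4 - (z5 0)^2*(z5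 1)^2*(z5 2)^2*(z5 0)⁻¹^5*(z5 1)⁻¹^4*(z5 2)⁻¹^4 - (z5 0)^2*(z5 1)^2*(z5 2)^3*(z5 0)⁻¹^6*(z5 1)⁻¹^4*(z5 2)⁻¹^4 - (z5 0)^2*(z5 1)^3*(z5 0)⁻¹^4*(z5 1)⁻¹^4*(z5 2)⁻¹^4 - (z5 0)^2*(z5 1)^3*(z5 2)^2*(z5 0)⁻¹^6*(z5 1)⁻¹^4*(z5 2)⁻¹^4 - (z5 0)^2*(z5 1)^4*(z5 0)⁻¹^5*(z5 1)⁻¹^4*(z5 2)⁻¹^4 - (z5 0)^3*(z5 2)^2*(z5 0)⁻¹^4*(z5 1)⁻¹^4*(z5 2)⁻¹^4 - (z5 0)^3*(z5 2)^4*(z5 0)⁻¹^6*(z5 1)⁻¹^4*(z5 2)⁻¹^4 - (z5 0)^3*(z5 1)^2*(z5 0)⁻¹^4*(z5 1)⁻¹^4*(z5 2)⁻¹^4 - (z5 0)^3*(z5 1)^2*(z5 2)^2*(z5 0)⁻¹^6*(z5 1)⁻¹^4*(z5 2)⁻¹^4 - (z5 0)^3*(z5 1)^4*(z5 0)⁻¹^6*(z5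 1)⁻¹^4*(z5 2)⁻¹^4) * iA
      + ( - 2*(z5 0)⁻¹^3*(z5 2)⁻¹^4 - 2*(z5 2)^2*(z5 0)⁻¹^3*(z5 1)⁻¹^2*(z5 2)⁻¹^4 - 2*(z5 2)^2*(z5 0)⁻¹^5*(z5 2)⁻¹^4 - 2*(z5 2)^3*(z5 0)⁻¹^5*(z5 1)⁻¹*(z5 2)⁻¹^4 - 2*(z5 2)^4*(z5 0)⁻¹^5*(z5 1)⁻¹^2*(z5 2)⁻¹^4 - (z5 2)^4*(z5 0)⁻¹^7*(z5 2)⁻¹^4 - 2*(z5 1)*(z5 0)⁻¹^3*(z5 1)⁻¹*(z5 2)⁻¹^4 - 2*(z5 1)*(z5 2)^2*(z5 0)⁻¹^3*(z5 1)⁻¹^3*(z5 2)⁻¹^4 - 2*(z5 1)*(z5 2)^2*(z5 0)⁻¹^5*(z5 1)⁻¹*(z5 2)⁻¹^4 - 2*(z5 1)*(z5 2)^3*(z5 0)⁻¹^5*(z5 1)⁻¹^2*(z5 2)⁻¹^4 - 2*(z5 1)*(z5 2)^4*(z5 0)⁻¹^5*(z5 1)⁻¹^3*(z5 2)⁻¹^4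 - (z5 1)*(z5 2)^4*(z5 0)⁻¹^7*(z5 1)⁻¹*(z5 2)⁻¹^4 - 2*(z5 1)^2*(z5 0)⁻¹^3*(z5 1)⁻¹^2*(z5 2)⁻¹^4 - 2*(z5 1)^2*(z5 2)^2*(z5 0)⁻¹^5*(z5 1)⁻¹^2*(z5 2)⁻¹^4 - 2*(z5 1)^2*(z5 2)^3*(z5 0)⁻¹^5*(z5 1)⁻¹^3*(z5 2)⁻¹^4 - (z5 1)^2*(z5 2)^4*(z5 0)⁻¹^7*(z5 1)⁻¹^2*(z5 2)⁻¹^4 - 2*(z5 1)^3*(z5 0)⁻¹^3*(z5 1)⁻¹^3*(z5 2)⁻¹^4 - 2*(z5 1)^3*(z5 2)^2*(z5 0)⁻¹^5*(z5 1)⁻¹^3*(z5 2)⁻¹^4 - (z5 1)^3*(z5 2)^4*(z5 0)⁻¹^7*(z5 1)⁻¹^3*(z5 2)⁻¹^4) * iB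
      + ( - 2*(z5 0)⁻¹^3*(z5 1)⁻¹^2*(z5 2)⁻¹^2 - 2*(z5 0)⁻¹^3*(z5 1)⁻¹^4 - 2*(z5 0)⁻¹^5*(z5 2)⁻¹^2 - 2*(z5 0)⁻¹^5*(z5 1)⁻¹*(z5 2)⁻¹ - 2*(z5 0)⁻¹^5*(z5 1)⁻¹^2 - (z5 0)⁻¹^7 - 2*(z5 2)*(z5 0)⁻¹^3*(z5 1)⁻¹^2*(z5 2)⁻¹^3 - 2*(z5 2)*(z5 0)⁻¹^3*(z5 1)⁻¹^4*(z5 2)⁻¹ - 2*(z5 2)*(z5 0)⁻¹^5*(z5 2)⁻¹^3 - 2*(z5 2)*(z5 0)⁻¹^5*(z5 1)⁻¹*(z5 2)⁻¹^2 - 2*(z5 2)*(z5 0)⁻¹^5*(z5 1)⁻¹^2*(z5 2)⁻¹ - (z5 2)*(z5 0)⁻¹^7*(z5 2)⁻¹ - 2*(z5 2)^2*(z5 0)⁻¹^3*(z5 1)⁻¹^4*(z5 2)⁻¹^2 - 2*(z5 2)^2*(z5 0)⁻¹^5*(z5 1)⁻¹*(z5 2)⁻¹^3 - 2*(z5 2)^2*(z5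 0)⁻¹^5*(z5 1)⁻¹^2*(z5 2)⁻¹^2 - (z5 2)^2*(z5 0)⁻¹^7*(z5 2)⁻¹^2 - 2*(z5 2)^3*(z5 0)⁻¹^3*(z5 1)⁻¹^4*(z5 2)⁻¹^3 - 2*(z5 2)^3*(z5 0)⁻¹^5*(z5 1)⁻¹^2*(z5 2)⁻¹^3 - (z5 2)^3*(z5 0)⁻¹^7*(z5 2)⁻¹^3) * iC
      + ( - (z5 0)⁻¹^3*(z5 2)⁻¹^4 - (z5 0)⁻¹^3*(z5 1)⁻¹^2*(z5 2)⁻¹^2 - (z5 0)⁻¹^3*(z5 1)⁻¹^4 - (z5 0)⁻¹^5*(z5 2)⁻¹^2 - (z5 0)⁻¹^5*(z5 1)⁻¹*(z5 2)⁻¹ - (z5 0)⁻¹^5*(z5 1)⁻¹^2 - (z5 0)⁻¹^7) * h2K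
  · show S15/M45 = T05 * (z5 1) + (S25/M45) * (z5 1) ^ (-2 : ℤ) + (z5 1) ^ (-6 : ℤ)
    rw [L0, S15, S25, M45, Dp5]
    simp only [zpow_neg, zpow_one, zpow_ofNat, div_eq_mul_inv, mul_inv, ← inv_pow, pow_one]
    have iA : z5 0 * (z5 0)⁻¹ = 1 := mul_inv_cancel₀ hA
    have iB : z5 1 * (z5 1)⁻¹ = 1 := mul_inv_cancel₀ hB
    have iC : z5 2 * (z5 2)⁻¹ = 1 := mul_inv_cancel₀ hC
    linear_combination ((z5 2)^2*(z5 1)⁻¹^4*(z5 2)⁻¹^4 + (z5 2)^3*(z5 0)⁻¹*(z5 1)⁻¹^4*(z5 2)⁻¹^4 - (z5 2)^4*(z5 1)⁻¹^6*(z5 2)⁻¹^4 + (z5 2)^4*(z5 0)⁻¹^2*(z5 1)⁻¹^4*(z5 2)⁻¹^4 - (z5 1)*(z5 2)^2*(z5 0)⁻¹*(z5 1)⁻¹^4*(z5 2)⁻¹^4 - (z5 1)*(z5 2)^3*(z5 0)⁻¹^2*(z5 1)⁻¹^4*(z5 2)⁻¹^4 + (z5 1)^2*(z5 1)⁻¹^4*(z5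 2)⁻¹^4 - (z5 1)^2*(z5 2)^2*(z5 1)⁻¹^6*(z5 2)⁻¹^4 + (z5 1)^2*(z5 2)^2*(z5 0)⁻¹^2*(z5 1)⁻¹^4*(z5 2)⁻¹^4 - (z5 1)^2*(z5 2)^3*(z5 0)⁻¹*(z5 1)⁻¹^6*(z5 2)⁻¹^4 - (z5 1)^2*(z5 2)^4*(z5 0)⁻¹^2*(z5 1)⁻¹^6*(z5 2)⁻¹^4 - (z5 1)^3*(z5 2)^2*(z5 0)⁻¹*(z5 1)⁻¹^6*(z5 2)⁻¹^4 - (z5 1)^3*(z5 2)^3*(z5 0)⁻¹^2*(z5 1)⁻¹^6*(z5 2)⁻¹^4 - (z5 1)^4*(z5 1)⁻¹^6*(z5 2)⁻¹^4 - (z5 1)^4*(z5 2)^2*(z5 0)⁻¹^2*(z5 1)⁻¹^6*(z5 2)⁻¹^4 + (z5 0)*(z5 2)^2*(z5 0)⁻¹*(z5 1)⁻¹^4*(z5 2)⁻¹^4 + (z5 0)*(z5 2)^3*(z5 0)⁻¹^2*(z5 1)⁻¹^4*(z5 2)⁻¹^4 - (z5 0)*(z5 2)^4*(z5 0)⁻¹*(z5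 1)⁻¹^6*(z5 2)⁻¹^4 + (z5 0)*(z5 2)^4*(z5 0)⁻¹^3*(z5 1)⁻¹^4*(z5 2)⁻¹^4 - (z5 0)*(z5 1)*(z5 2)^2*(z5 0)⁻¹^2*(z5 1)⁻¹^4*(z5 2)⁻¹^4 - (z5 0)*(z5 1)*(z5 2)^3*(z5 0)⁻¹^3*(z5 1)⁻¹^4*(z5 2)⁻¹^4 + (z5 0)*(z5 1)^2*(z5 0)⁻¹*(z5 1)⁻¹^4*(z5 2)⁻¹^4 - (z5 0)*(z5 1)^2*(z5 2)^2*(z5 0)⁻¹*(z5 1)⁻¹^6*(z5 2)⁻¹^4 + (z5 0)*(z5 1)^2*(z5 2)^2*(z5 0)⁻¹^3*(z5 1)⁻¹^4*(z5 2)⁻¹^4 - (z5 0)*(z5 1)^2*(z5 2)^3*(z5 0)⁻¹^2*(z5 1)⁻¹^6*(z5 2)⁻¹^4 - (z5 0)*(z5 1)^2*(z5 2)^4*(z5 0)⁻¹^3*(z5 1)⁻¹^6*(z5 2)⁻¹^4 - (z5 0)*(z5 1)^3*(z5 2)^2*(z5 0)⁻¹^2*(z5 1)⁻¹^6*(z5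 2)⁻¹^4 - (z5 0)*(z5 1)^3*(z5 2)^3*(z5 0)⁻¹^3*(z5 1)⁻¹^6*(z5 2)⁻¹^4 - (z5 0)*(z5 1)^4*(z5 0)⁻¹*(z5 1)⁻¹^6*(z5 2)⁻¹^4 - (z5 0)*(z5 1)^4*(z5 2)^2*(z5 0)⁻¹^3*(z5 1)⁻¹^6*(z5 2)⁻¹^4 + (z5 0)^2*(z5 2)^2*(z5 0)⁻¹^2*(z5 1)⁻¹^4*(z5 2)⁻¹^4 + (z5 0)^2*(z5 2)^3*(z5 0)⁻¹^3*(z5 1)⁻¹^4*(z5 2)⁻¹^4 - (z5 0)^2*(z5 2)^4*(z5 0)⁻¹^2*(z5 1)⁻¹^6*(z5 2)⁻¹^4 - (z5 0)^2*(z5 1)*(z5 2)^2*(z5 0)⁻¹^3*(z5 1)⁻¹^4*(z5 2)⁻¹^4 + (z5 0)^2*(z5 1)^2*(z5 0)⁻¹^2*(z5 1)⁻¹^4*(z5 2)⁻¹^4 - (z5 0)^2*(z5 1)^2*(z5 2)^2*(z5 0)⁻¹^2*(z5 1)⁻¹^6*(z5 2)⁻¹^4 - (z5 0)^2*(z5 1)^2*(z5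 2)^3*(z5 0)⁻¹^3*(z5 1)⁻¹^6*(z5 2)⁻¹^4 - (z5 0)^2*(z5 1)^3*(z5 2)^2*(z5 0)⁻¹^3*(z5 1)⁻¹^6*(z5 2)⁻¹^4 - (z5 0)^2*(z5 1)^4*(z5 0)⁻¹^2*(z5 1)⁻¹^6*(z5 2)⁻¹^4 + (z5 0)^3*(z5 2)^2*(z5 0)⁻¹^3*(z5 1)⁻¹^4*(z5 2)⁻¹^4 - (z5 0)^3*(z5 2)^4*(z5 0)⁻¹^3*(z5 1)⁻¹^6*(z5 2)⁻¹^4 + (z5 0)^3*(z5 1)^2*(z5 0)⁻¹^3*(z5 1)⁻¹^4*(z5 2)⁻¹^4 - (z5 0)^3*(z5 1)^2*(z5 2)^2*(z5 0)⁻¹^3*(z5 1)⁻¹^6*(z5 2)⁻¹^4 - (z5 0)^3*(z5 1)^4*(z5 0)⁻¹^3*(z5 1)⁻¹^6*(z5 2)⁻¹^4) * iA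
      + ( - (z5 2)^2*(z5 1)⁻¹^4*(z5 2)⁻¹^4 - 2*(z5 2)^2*(z5 0)⁻¹*(z5 1)⁻¹^3*(z5 2)⁻¹^4 - (z5 2)^3*(z5 0)⁻¹*(z5 1)⁻¹^4*(z5 2)⁻¹^4 - 2*(z5 2)^3*(z5 0)⁻¹^2*(z5 1)⁻¹^3*(z5 2)⁻¹^4 - (z5 2)^4*(z5 0)⁻¹^2*(z5 1)⁻¹^4*(z5 2)⁻¹^4 - (z5 1)*(z5 2)^2*(z5 1)⁻¹^5*(z5 2)⁻¹^4 - (z5 1)*(z5 2)^2*(z5 0)⁻¹*(z5 1)⁻¹^4*(z5 2)⁻¹^4 - (z5 1)*(z5 2)^3*(z5 0)⁻¹*(z5 1)⁻¹^5*(z5 2)⁻¹^4 - (z5 1)*(z5 2)^3*(z5 0)⁻¹^2*(z5 1)⁻¹^4*(z5 2)⁻¹^4 - (z5 1)*(z5 2)^4*(z5 0)⁻¹^2*(z5 1)⁻¹^5*(z5 2)⁻¹^4 - (z5 1)^2*(z5 1)⁻¹^4*(z5 2)⁻¹^4 - (z5 1)^2*(z5 2)^2*(z5 0)⁻¹*(z5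 1)⁻¹^5*(z5 2)⁻¹^4 - (z5 1)^2*(z5 2)^2*(z5 0)⁻¹^2*(z5 1)⁻¹^4*(z5 2)⁻¹^4 - (z5 1)^2*(z5 2)^3*(z5 0)⁻¹^2*(z5 1)⁻¹^5*(z5 2)⁻¹^4 - (z5 1)^2*(z5 2)^4*(z5 0)⁻¹^4*(z5 1)⁻¹^4*(z5 2)⁻¹^4 - (z5 1)^3*(z5 1)⁻¹^5*(z5 2)⁻¹^4 - (z5 1)^3*(z5 2)^2*(z5 0)⁻¹^2*(z5 1)⁻¹^5*(z5 2)⁻¹^4 - (z5 1)^3*(z5 2)^4*(z5 0)⁻¹^4*(z5 1)⁻¹^5*(z5 2)⁻¹^4) * iB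
      + ( - (z5 1)⁻¹^6 - 2*(z5 0)⁻¹*(z5 1)⁻¹^3*(z5 2)⁻¹^2 - 2*(z5 0)⁻¹^2*(z5 1)⁻¹^3*(z5 2)⁻¹ - (z5 2)*(z5 1)⁻¹^6*(z5 2)⁻¹ - 2*(z5 2)*(z5 0)⁻¹*(z5 1)⁻¹^3*(z5 2)⁻¹^3 - 2*(z5 2)*(z5 0)⁻¹^2*(z5 1)⁻¹^3*(z5 2)⁻¹^2 - (z5 2)^2*(z5 1)⁻¹^6*(z5 2)⁻¹^2 - 2*(z5 2)^2*(z5 0)⁻¹^2*(z5 1)⁻¹^3*(z5 2)⁻¹^3 - (z5 2)^3*(z5 1)⁻¹^6*(z5 2)⁻¹^3) * iC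
      + ( - (z5 1)⁻¹^6 - (z5 0)⁻¹*(z5 1)⁻¹^3*(z5 2)⁻¹^2 - (z5 0)⁻¹^2*(z5 1)⁻¹^3*(z5 2)⁻¹) * h2K
  · show S25/M45 = T05 * (z5 2)^3 + (S15/M45) * (z5 2) ^ 2 + (z5 2) ^ (-4 : ℤ)
    rw [L0, S15, S25, M45, Dp5]
    simp only [zpow_neg, zpow_one, zpow_ofNat, div_eq_mul_inv, mul_inv, ← inv_pow, pow_one]
    have iA : z5 0 * (z5 0)⁻¹ = 1 := mul_inv_cancel₀ hA
    have iB : z5 1 * (z5 1)⁻¹ = 1 := mul_inv_cancel₀ hB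
    have iC : z5 2 * (z5 2)⁻¹ = 1 := mul_inv_cancel₀ hC
    linear_combination ( - 2*(z5 2)^5*(z5 0)⁻¹*(z5 1)⁻¹^4*(z5 2)⁻¹^4 - 2*(z5 2)^6*(z5 0)⁻¹^2*(z5 1)⁻¹^4*(z5 2)⁻¹^4 + (z5 1)^4*(z5 1)⁻¹^4*(z5 2)⁻¹^4 - 2*(z5 0)*(z5 2)^5*(z5 0)⁻¹^2*(z5 1)⁻¹^4*(z5 2)⁻¹^4 - 2*(z5 0)*(z5 2)^6*(z5 0)⁻¹^3*(z5 1)⁻¹^4*(z5 2)⁻¹^4 + (z5 0)*(z5 1)^4*(z5 0)⁻¹*(z5 1)⁻¹^4*(z5 2)⁻¹^4 - 2*(z5 0)^2*(z5 2)^5*(z5 0)⁻¹^3*(z5 1)⁻¹^4*(z5 2)⁻¹^4 + (z5 0)^2*(z5 1)^4*(z5 0)⁻¹^2*(z5 1)⁻¹^4*(z5 2)⁻¹^4 + (z5 0)^3*(z5 1)^4*(z5 0)⁻¹^3*(z5 1)⁻¹^4*(z5 2)⁻¹^4) * iA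
      + ((z5 2)⁻¹^4 - 2*(z5 2)^5*(z5 0)⁻¹^4*(z5 1)⁻¹*(z5 2)⁻¹^4 - 2*(z5 2)^6*(z5 0)⁻¹^4*(z5 1)⁻¹^2*(z5 2)⁻¹^4 + (z5 1)*(z5 1)⁻¹*(z5 2)⁻¹^4 - 2*(z5 1)*(z5 2)^5*(z5 0)⁻¹^4*(z5 1)⁻¹^2*(z5 2)⁻¹^4 - 2*(z5 1)*(z5 2)^6*(z5 0)⁻¹^4*(z5 1)⁻¹^3*(z5 2)⁻¹^4 + (z5 1)^2*(z5 1)⁻¹^2*(z5 2)⁻¹^4 - 2*(z5 1)^2*(z5 2)^5*(z5 0)⁻¹^4*(z5 1)⁻¹^3*(z5 2)⁻¹^4 + (z5 1)^3*(z5 1)⁻¹^3*(z5 2)⁻¹^4) * iB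
      + ( - 2*(z5 2)*(z5 0)⁻¹*(z5 1)⁻¹^4 - 2*(z5 2)*(z5 0)⁻¹^4*(z5 1)⁻¹ - 2*(z5 2)^2*(z5 0)⁻¹*(z5 1)⁻¹^4*(z5 2)⁻¹ - 2*(z5 2)^2*(z5 0)⁻¹^2*(z5 1)⁻¹^4 - 2*(z5 2)^2*(z5 0)⁻¹^4*(z5 1)⁻¹*(z5 2)⁻¹ - 2*(z5 2)^2*(z5 0)⁻¹^4*(z5 1)⁻¹^2 - 2*(z5 2)^3*(z5 0)⁻¹*(z5 1)⁻¹^4*(z5 2)⁻¹^2 - 2*(z5 2)^3*(z5 0)⁻¹^2*(z5 1)⁻¹^4*(z5 2)⁻¹ - 2*(z5 2)^3*(z5 0)⁻¹^4*(z5 1)⁻¹*(z5 2)⁻¹^2 - 2*(z5 2)^3*(z5 0)⁻¹^4*(z5 1)⁻¹^2*(z5 2)⁻¹ - 2*(z5 2)^4*(z5 0)⁻¹*(z5 1)⁻¹^4*(z5 2)⁻¹^3 - 2*(z5 2)^4*(z5 0)⁻¹^2*(z5 1)⁻¹^4*(z5 2)⁻¹^2 - 2*(z5 2)^4*(z5 0)⁻¹^4*(z5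 1)⁻¹*(z5 2)⁻¹^3 - 2*(z5 2)^4*(z5 0)⁻¹^4*(z5 1)⁻¹^2*(z5 2)⁻¹^2 - 2*(z5 2)^5*(z5 0)⁻¹^2*(z5 1)⁻¹^4*(z5 2)⁻¹^3 - 2*(z5 2)^5*(z5 0)⁻¹^4*(z5 1)⁻¹^2*(z5 2)⁻¹^3) * iC
      + ( - (z5 2)*(z5 0)⁻¹*(z5 1)⁻¹^4 - (z5 2)*(z5 0)⁻¹^4*(z5 1)⁻¹ - (z5 2)^2*(z5 0)⁻¹^2*(z5 1)⁻¹^4 - (z5 2)^2*(z5 0)⁻¹^4*(z5 1)⁻¹^2) * h2K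

lemma key5 (f : K5 × K5 × K5) (hf : Eqs5 f) : f = (T05, S15/M45, S25/M45) := by
  obtain ⟨x, y, z⟩ := f
  obtain ⟨h1, h2, h3⟩ := hf
  have p1 := conv1 x y z h1
  have p2 := conv2 x y z h2
  have p3 := conv3 x y z h3
  rw [Prod.mk.injEq, Prod.mk.injEq]
  refine ⟨?_, ?_, ?_⟩
  · have q : x * D5 = Dp5^2 := by
      rw [D5, M45, Dp5]
      linear_combination
        ( - (z5 1)^4*(z5 2)^6 + (z5 1)^6*(z5 2)^4) * p1
        + ((z5 0)^4*(z5 2)^6 - (z5 0)^6*(z5 2)^4) * p2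
        + ( - (z5 0)^4*(z5 1)^6 + (z5 0)^6*(z5 1)^4) * p3
        + (((z5 0)^4*(z5 1)^6*(z5 2)^7 + (z5 0)^6*(z5 1)^7*(z5 2)^4 + (z5 0)^7*(z5 1)^4*(z5 2)^6) * x
          + ( - (z5 1)^4*(z5 2)^6 - (z5 1)^5*(z5 2)^5 - (z5 0)^2*(z5 1)^2*(z5 2)^6 - (z5 0)^2*(z5 1)^3*(z5 2)^5 - (z5 0)^2*(z5 1)^5*(z5 2)^3 - (z5 0)^2*(z5 1)^6*(z5 2)^2 - (z5 0)^3*(z5 1)^2*(z5 2)^5 - (z5 0)^3*(z5 1)^3*(z5 2)^4 - (z5 0)^3*(z5 1)^4*(z5 2)^3 - (z5 0)^3*(z5 1)^5*(z5 2)^2 - (z5 0)^4*(z5 1)^3*(z5 2)^3 - (z5 0)^4*(z5 1)^6 - (z5 0)^5*(z5 2)^5 - (z5 0)^5*(z5 1)^2*(z5 2)^3 - (z5 0)^5*(z5 1)^3*(z5 2)^2 - (z5 0)^5*(z5 1)^5 - (z5 0)^6*(z5 2)^4 - (z5 0)^6*(z5 1)^2*(z5 2)^2)) * h2K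
    have hx : x = Dp5^2 / D5 := (eq_div_iff hD5).mpr q
    rw [hx, L0, div_eq_div_iff hD5 hM45, D5]
    ring
  · have q : y * D5 = N15 := by
      rw [D5, M45, Dp5, N15]
      linear_combination
        ((z5 1)^4*(z5 2)^7 - (z5 1)^7*(z5 2)^4) * p1
        + ( - (z5 0)^4*(z5 2)^7 + (z5 0)^7*(z5 2)^4) * p2
        + ((z5 0)^4*(z5 1)^7 - (z5 0)^7*(z5 1)^4) * p3
        + (((z5 0)^4*(z5 1)^6*(z5 2)^7 + (z5 0)^6*(z5 1)^7*(z5 2)^4 + (z5 0)^7*(z5 1)^4*(z5 2)^6) * y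
          + ( - (z5 1)^7*(z5 2)^4 - (z5 0)^4*(z5 2)^7 - (z5 0)^7*(z5 1)^4)) * h2K
    have hy : y = N15 / D5 := (eq_div_iff hD5).mpr q
    rw [hy, div_eq_div_iff hD5 hM45, D5, M45, Dp5, N15, S15]
    linear_combination ( - (z5 0)^4*(z5 1)^9*(z5 2)^10 - (z5 0)^4*(z5 1)^10*(z5 2)^9 - (z5 0)^6*(z5 1)^6*(z5 2)^11 - (z5 0)^6*(z5 1)^7*(z5 2)^10 - (z5 0)^6*(z5 1)^8*(z5 2)^9 - (z5 0)^6*(z5 1)^9*(z5 2)^8 - (z5 0)^6*(z5 1)^10*(z5 2)^7 - (z5 0)^6*(z5 1)^11*(z5 2)^6 - (z5 0)^7*(z5 1)^6*(z5 2)^10 - (z5 0)^7*(z5 1)^7*(z5 2)^9 - (z5 0)^7*(z5 1)^8*(z5 2)^8 - (z5 0)^7*(z5 1)^9*(z5 2)^7 - (z5 0)^7*(z5 1)^10*(z5 2)^6 - (z5 0)^8*(z5 1)^6*(z5 2)^9 - (z5 0)^8*(z5 1)^7*(z5 2)^8 - (z5 0)^8*(z5 1)^8*(z5 2)^7 - (z5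 0)^8*(z5 1)^9*(z5 2)^6 - (z5 0)^9*(z5 1)^4*(z5 2)^10 - (z5 0)^9*(z5 1)^6*(z5 2)^8 - (z5 0)^9*(z5 1)^7*(z5 2)^7 - (z5 0)^9*(z5 1)^8*(z5 2)^6 - (z5 0)^9*(z5 1)^10*(z5 2)^4 - (z5 0)^10*(z5 1)^4*(z5 2)^9 - (z5 0)^10*(z5 1)^6*(z5 2)^7 - (z5 0)^10*(z5 1)^7*(z5 2)^6 - (z5 0)^10*(z5 1)^9*(z5 2)^4 - (z5 0)^11*(z5 1)^6*(z5 2)^6) * h2K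
  · have q : z * D5 = N25 := by
      rw [D5, M45, Dp5, N25]
      linear_combination
        ( - (z5 1)^6*(z5 2)^7 + (z5 1)^7*(z5 2)^6) * p1
        + ((z5 0)^6*(z5 2)^7 - (z5 0)^7*(z5 2)^6) * p2
        + ( - (z5 0)^6*(z5 1)^7 + (z5 0)^7*(z5 1)^6) * p3
        + (((z5 0)^4*(z5 1)^6*(z5 2)^7 + (z5 0)^6*(z5 1)^7*(z5 2)^4 + (z5 0)^7*(z5 1)^4*(z5 2)^6) * z
          + ( - (z5 1)^6*(z5 2)^7 - (z5 0)^6*(z5 1)^7 - (z5 0)^7*(z5 2)^6)) * h2K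
    have hzq : z = N25 / D5 := (eq_div_iff hD5).mpr q
    rw [hzq, div_eq_div_iff hD5 hM45, D5, M45, Dp5, N25, S25]
    linear_combination ( - (z5 0)^6*(z5 1)^8*(z5 2)^11 - (z5 0)^6*(z5 1)^9*(z5 2)^10 - (z5 0)^6*(z5 1)^10*(z5 2)^9 - (z5 0)^6*(z5 1)^11*(z5 2)^8 - (z5 0)^7*(z5 1)^8*(z5 2)^10 - (z5 0)^7*(z5 1)^9*(z5 2)^9 - (z5 0)^7*(z5 1)^10*(z5 2)^8 - (z5 0)^8*(z5 1)^6*(z5 2)^11 - (z5 0)^8*(z5 1)^7*(z5 2)^10 - (z5 0)^8*(z5 1)^8*(z5 2)^9 - (z5 0)^8*(z5 1)^9*(z5 2)^8 - (z5 0)^8*(z5 1)^10*(z5 2)^7 - (z5 0)^8*(z5 1)^11*(z5 2)^6 - (z5 0)^9*(z5 1)^6*(z5 2)^10 - (z5 0)^9*(z5 1)^7*(z5 2)^9 - (z5 0)^9*(z5 1)^8*(z5 2)^8 - (z5 0)^9*(z5 1)^9*(z5 2)^7 - (z5 0)^9*(z5 1)^10*(z5 2)^6 - (z5 0)^10*(z5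 1)^6*(z5 2)^9 - (z5 0)^10*(z5 1)^7*(z5 2)^8 - (z5 0)^10*(z5 1)^8*(z5 2)^7 - (z5 0)^10*(z5 1)^9*(z5 2)^6 - (z5 0)^11*(z5 1)^6*(z5 2)^8 - (z5 0)^11*(z5 1)^8*(z5 2)^6) * h2K

theorem stmt_5 :
    (∃! f : K5 × K5 × K5, Eqs5 f) ∧
    ∀ f : K5 × K5 × K5, Eqs5 f →
      f.1 = (z5 0) ^ (-1 : ℤ) * (z5 1) ^ (-2 : ℤ) * (z5 2) ^ (-4 : ℤ)
        + (z5 0) ^ (-1 : ℤ) * (z5 1) ^ (-4 : ℤ) * (z5 2) ^ (-2 : ℤ)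
        + (z5 0) ^ (-2 : ℤ) * (z5 1) ^ (-1 : ℤ) * (z5 2) ^ (-4 : ℤ)
        + (z5 0) ^ (-2 : ℤ) * (z5 1) ^ (-4 : ℤ) * (z5 2) ^ (-1 : ℤ)
        + (z5 0) ^ (-4 : ℤ) * (z5 1) ^ (-1 : ℤ) * (z5 2) ^ (-2 : ℤ)
        + (z5 0) ^ (-4 : ℤ) * (z5 1) ^ (-2 : ℤ) * (z5 2) ^ (-1 : ℤ) := by
  constructor
  · exact ⟨(T05, S15/M45, S25/M45), sat5, fun y hy => key5 y hy⟩
  · intro f hf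
    have := congrArg Prod.fst (key5 f hf)
    simpa [T05] using this
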